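/- Let R be a commutative ring, M and N R-modules, and suppose there is a surjection M^⊕n ↠ N for some n ≥ 1. Then the composite Z(End_R(M ⊕ N)) ↪ Z(End_R(M)) × Z(End_R(N)) ↠ Z(End_R(M)) is injective. -/

import Mathlib

/-- Let `R` be a commutative ring, `M` and `N` `R`-modules, and suppose there is a
surjection `M^⊕n ↠ N` for some `n ≥ 1`.  Then the composite
`Z(End_R(M ⊕ N)) ↪ Z(End_R M) × Z(End_R N) ↠ Z(End_R M)` is injective; equivalently,
a central endomorphism of `M ⊕ N` whose `M`-component vanishes is zero. -/
theorem center_end_prod_proj_injective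
    (R : Type) [CommRing R]
    (M N : Type) [AddCommGroup M] [Module R M] [AddCommGroup N] [Module R N]
    (n : ℕ) (hn : 1 ≤ n) (π : (Fin n → M) →ₗ[R] N) (hπ : Function.Surjective π) :
    ∀ f ∈ Subalgebra.center R (Module.End R (M × N)),
      (LinearMap.fst R M N) ∘ₗ f ∘ₗ (LinearMap.inl R M N) = 0 → f = 0 := by
  intro f hf h0
  rw [Subalgebra.mem_center_iff] at hf
  have h0' : ∀ m : M, (f (m, 0)).1 = 0 := fun m => by
    simpa using LinearMap.congr_fun h0 m
  set p : Module.End R (M × N) := (LinearMap.inl R M N) ∘ₗ (LinearMap.fst R M N) with hp_def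
  have hp : ∀ v : M × N, ((f v).1, (0 : N)) = f (v.1, 0) := by
    intro v
    have := LinearMap.congr_fun (hf p) v
    simpa [hp_def, Module.End.mul_apply] using this
  have hM : ∀ m : M, f (m, 0) = 0 := by
    intro m
    have := (hp (m, 0)).symm
    rw [h0'] at this
    simpa [Prod.mk_zero_zero] using this
  have hfst : ∀ v : M × N, (f v).1 = 0 := by
    intro v
    have := hp v
    rw [hM v.1] at this
    exact (Prod.mk.injEq _ _ _ _).mp this.symm |>.1.symm
  have hN : ∀ (c : M →ₗ[R] N) (m : M), f (0, c m) = 0 := by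
    intro c m
    have := LinearMap.congr_fun
      (hf ((LinearMap.inr R M N) ∘ₗ c ∘ₗ (LinearMap.fst R M N))) (m, (0 : N))
    simpa [Module.End.mul_apply, hfst, Prod.mk_zero_zero] using this.symm
  have hNall : ∀ y : N, f (0, y) = 0 := by
    intro y
    obtain ⟨x, rfl⟩ := hπ y
    have hx : ((0 : M), π x) = ∑ i, ((0 : M), (π ∘ₗ LinearMap.single R (fun _ => M) i) (x i)) := by
      rw [Prod.ext_iff]
      refine ⟨by simp [Prod.fst_sum], ?_⟩
      simp only [Prod.snd_sum, LinearMap.comp_apply, LinearMap.single_apply, ← map_sum]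
      rw [Finset.univ_sum_single]
    rw [hx, map_sum]
    exact Finset.sum_eq_zero fun i _ => hN _ _
  refine LinearMap.ext fun v => ?_
  have hv : v = (v.1, (0 : N)) + ((0 : M), v.2) := by simp
  rw [hv, map_add, hM, hNall]
  simp
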